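/- Let u be a 2π-periodic C² function with amplitude V = max u − min u, v = u', and x₀ a maximum point of v with v(x₀) > 0 and Λv(x₀) > 0. Then (Hv(x₀))² ≤ (16/π)·V·Λv(x₀), where Hv is the Hilbert transform of v on ℝ. -/

import Mathlib

set_option maxHeartbeats 1000000

open Real Set Filter Topology MeasureTheory intervalIntegral

lemma aux_deriv_inv (x₀ y : ℝ) (h : x₀ - y ≠ 0) :
    HasDerivAt (fun z => (x₀ - z)⁻¹) (((x₀ - y)^2)⁻¹) y := by
  have h1 : HasDerivAt (fun z => x₀ - z) (-1) y := (hasDerivAt_id y).const_sub x₀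
  have := h1.inv h
  refine this.congr_deriv ?_
  ring

lemma aux_inv_sq (x₀ a b : ℝ) (hab : a ≤ b) (hx : ∀ y ∈ Icc a b, x₀ - y ≠ 0) :
    ∫ y in a..b, ((x₀ - y)^2)⁻¹ = (x₀ - b)⁻¹ - (x₀ - a)⁻¹ := by
  have hI : IntervalIntegrable (fun y => ((x₀ - y)^2)⁻¹) volume a b := by
    apply ContinuousOn.intervalIntegrable
    rw [uIcc_of_le hab]
    exact ContinuousOn.inv₀ (by fun_prop) (fun y hy => pow_ne_zero _ (hx y hy))
  exact integral_eq_sub_of_hasDerivAt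
    (fun y hy => aux_deriv_inv x₀ y (hx y (by rwa [uIcc_of_le hab] at hy))) hI

lemma aux_inv (x₀ a b : ℝ) (hab : a ≤ b) (hx : ∀ y ∈ Icc a b, x₀ - y ≠ 0) :
    ∫ y in a..b, (x₀ - y)⁻¹ = Real.log (x₀ - a) - Real.log (x₀ - b) := by
  have hI : IntervalIntegrable (fun y => (x₀ - y)⁻¹) volume a b := by
    apply ContinuousOn.intervalIntegrable
    rw [uIcc_of_le hab]
    exact ContinuousOn.inv₀ (by fun_prop) (fun y hy => hx y hy)
  have key : ∀ y ∈ uIcc a b, HasDerivAt (fun z => -Real.log (x₀ - z)) ((x₀ - y)⁻¹) y := by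
    intro y hy
    rw [uIcc_of_le hab] at hy
    have h1 : HasDerivAt (fun z => x₀ - z) (-1) y := (hasDerivAt_id y).const_sub x₀
    have h2 := (Real.hasDerivAt_log (hx y hy)).comp y h1
    have := h2.neg
    refine this.congr_deriv ?_
    ring
  have := integral_eq_sub_of_hasDerivAt key hI
  rw [this]; ring

lemma aux_ibp (w : ℝ → ℝ) (x₀ a b : ℝ) (hw : ∀ y, HasDerivAt w (deriv w y) y)
    (hw' : Continuous (deriv w)) (hcw : Continuous w)
    (hab : a ≤ b) (hx : ∀ y ∈ Icc a b, x₀ - y ≠ 0) :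
    ∫ y in a..b, deriv w y / (x₀ - y) =
      w b / (x₀ - b) - w a / (x₀ - a) - ∫ y in a..b, w y / (x₀ - y)^2 := by
  have hxne : ∀ y ∈ Icc a b, ((x₀ - y)^2) ≠ 0 := fun y hy => pow_ne_zero _ (hx y hy)
  have hI1 : IntervalIntegrable (fun y => deriv w y / (x₀ - y)) volume a b := by
    apply ContinuousOn.intervalIntegrable
    rw [uIcc_of_le hab]
    exact ContinuousOn.div (hw'.continuousOn) (by fun_prop) hx
  have hI2 : IntervalIntegrable (fun y => w y / (x₀ - y)^2) volume a b := by
    apply ContinuousOn.intervalIntegrable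
    rw [uIcc_of_le hab]
    exact ContinuousOn.div (hcw.continuousOn) (by fun_prop) hxne
  have key : ∫ y in a..b, (deriv w y / (x₀ - y) + w y / (x₀ - y)^2) =
      w b / (x₀ - b) - w a / (x₀ - a) := by
    have hder : ∀ y ∈ uIcc a b,
        HasDerivAt (fun z => w z / (x₀ - z)) (deriv w y / (x₀ - y) + w y / (x₀ - y)^2) y := by
      intro y hy
      rw [uIcc_of_le hab] at hy
      have h2 := (hw y).mul (aux_deriv_inv x₀ y (hx y hy))
      have heq : (fun z => w z / (x₀ - z)) = fun z => w z * (x₀ - z)⁻¹ := by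
        funext z; rw [div_eq_mul_inv]
      rw [heq]
      refine h2.congr_deriv ?_
      ring
    have := integral_eq_sub_of_hasDerivAt hder (hI1.add hI2)
    simpa using this
  rw [integral_add hI1 hI2] at key
  linarith

lemma aux_far (w : ℝ → ℝ) (x₀ a b M : ℝ) (hw : ∀ y, HasDerivAt w (deriv w y) y)
    (hw' : Continuous (deriv w)) (hcw : Continuous w) (hab : a ≤ b)
    (hx : ∀ y ∈ Icc a b, x₀ - y ≠ 0) (hM : ∀ y, |w y| ≤ M) :
    |∫ y in a..b, deriv w y / (x₀ - y)| ≤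
      M * |(x₀ - b)⁻¹| + M * |(x₀ - a)⁻¹| + M * ((x₀ - b)⁻¹ - (x₀ - a)⁻¹) := by
  have hM0 : 0 ≤ M := le_trans (abs_nonneg _) (hM 0)
  rw [aux_ibp w x₀ a b hw hw' hcw hab hx]
  have hb1 : |w b / (x₀ - b)| ≤ M * |(x₀ - b)⁻¹| := by
    rw [div_eq_mul_inv, abs_mul]
    exact mul_le_mul_of_nonneg_right (hM b) (abs_nonneg _)
  have ha1 : |w a / (x₀ - a)| ≤ M * |(x₀ - a)⁻¹| := by
    rw [div_eq_mul_inv, abs_mul]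
    exact mul_le_mul_of_nonneg_right (hM a) (abs_nonneg _)
  have hint : |∫ y in a..b, w y / (x₀ - y)^2| ≤ M * ((x₀ - b)⁻¹ - (x₀ - a)⁻¹) := by
    have h1 : |∫ y in a..b, w y / (x₀ - y)^2| ≤ ∫ y in a..b, |w y / (x₀ - y)^2| :=
      intervalIntegral.abs_integral_le_integral_abs hab
    have hI2 : IntervalIntegrable (fun y => |w y / (x₀ - y)^2|) volume a b := by
      apply ContinuousOn.intervalIntegrable
      rw [uIcc_of_le hab]
      exact (ContinuousOn.div (hcw.continuousOn) (by fun_prop)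
        (fun y hy => pow_ne_zero _ (hx y hy))).abs
    have hI3 : IntervalIntegrable (fun y => M * ((x₀ - y)^2)⁻¹) volume a b := by
      apply ContinuousOn.intervalIntegrable
      rw [uIcc_of_le hab]
      exact ContinuousOn.mul continuousOn_const
        (ContinuousOn.inv₀ (by fun_prop) (fun y hy => pow_ne_zero _ (hx y hy)))
    have h2 : ∫ y in a..b, |w y / (x₀ - y)^2| ≤ ∫ y in a..b, M * ((x₀ - y)^2)⁻¹ := by
      apply intervalIntegral.integral_mono_on hab hI2 hI3
      intro y hy
      rw [abs_div, div_eq_mul_inv, abs_of_nonneg (by positivity : (0:ℝ) ≤ (x₀ - y)^2)]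
      exact mul_le_mul_of_nonneg_right (hM y) (by positivity)
    have h3 : ∫ y in a..b, M * ((x₀ - y)^2)⁻¹ = M * ((x₀ - b)⁻¹ - (x₀ - a)⁻¹) := by
      rw [intervalIntegral.integral_const_mul, aux_inv_sq x₀ a b hab hx]
    linarith
  calc |w b / (x₀ - b) - w a / (x₀ - a) - ∫ y in a..b, w y / (x₀ - y)^2|
      ≤ |w b / (x₀ - b)| + |w a / (x₀ - a)| + |∫ y in a..b, w y / (x₀ - y)^2| := by
        apply (abs_sub _ _).trans
        gcongr
        exact abs_sub _ _
    _ ≤ _ := by linarith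

lemma aux_near (v : ℝ → ℝ) (hv : Continuous v) (x₀ a b rr : ℝ) (hab : a ≤ b)
    (hmax : ∀ y, v y ≤ v x₀) (hx : ∀ y ∈ Icc a b, x₀ - y ≠ 0)
    (hrr : ∀ y ∈ Icc a b, |x₀ - y| ≤ rr) :
    |(∫ y in a..b, v y / (x₀ - y)) -
        v x₀ * (Real.log (x₀ - a) - Real.log (x₀ - b))| ≤
      rr * ∫ y in a..b, (v x₀ - v y) / (x₀ - y)^2 := by
  have hI1 : IntervalIntegrable (fun y => (v y - v x₀) / (x₀ - y)) volume a b := by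
    apply ContinuousOn.intervalIntegrable
    rw [uIcc_of_le hab]
    exact ContinuousOn.div (by fun_prop) (by fun_prop) hx
  have hI0 : IntervalIntegrable (fun y => v x₀ * (x₀ - y)⁻¹) volume a b := by
    apply ContinuousOn.intervalIntegrable
    rw [uIcc_of_le hab]
    exact ContinuousOn.mul continuousOn_const (ContinuousOn.inv₀ (by fun_prop) hx)
  have hIh : IntervalIntegrable (fun y => (v x₀ - v y) / (x₀ - y)^2) volume a b := by
    apply ContinuousOn.intervalIntegrable
    rw [uIcc_of_le hab]
    exact ContinuousOn.div (by fun_prop) (by fun_prop)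
      (fun y hy => pow_ne_zero _ (hx y hy))
  have hsplit : (∫ y in a..b, v y / (x₀ - y)) =
      (∫ y in a..b, (v y - v x₀) / (x₀ - y)) +
        v x₀ * (Real.log (x₀ - a) - Real.log (x₀ - b)) := by
    have hEq : EqOn (fun y => v y / (x₀ - y))
        (fun y => (v y - v x₀) / (x₀ - y) + v x₀ * (x₀ - y)⁻¹) (uIcc a b) := by
      intro y hy
      rw [uIcc_of_le hab] at hy
      have h := hx y hy
      field_simp
      ring
    rw [intervalIntegral.integral_congr hEq, intervalIntegral.integral_add hI1 hI0,
      intervalIntegral.integral_const_mul, aux_inv x₀ a b hab hx]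
  rw [hsplit]
  have h1 : |(∫ y in a..b, (v y - v x₀) / (x₀ - y))| ≤
      ∫ y in a..b, |(v y - v x₀) / (x₀ - y)| :=
    intervalIntegral.abs_integral_le_integral_abs hab
  have h2 : ∫ y in a..b, |(v y - v x₀) / (x₀ - y)| ≤
      ∫ y in a..b, rr * ((v x₀ - v y) / (x₀ - y)^2) := by
    apply intervalIntegral.integral_mono_on hab hI1.abs (hIh.const_mul rr)
    intro y hy
    have hd : x₀ - y ≠ 0 := hx y hy
    have hdp : 0 < |x₀ - y| := abs_pos.mpr hd
    have hA : 0 ≤ v x₀ - v y := by linarith [hmax y]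
    rw [abs_div, abs_sub_comm, abs_of_nonneg hA]
    have hsq : (x₀ - y)^2 = |x₀ - y|^2 := (sq_abs _).symm
    rw [hsq]
    have h3 : (v x₀ - v y)/|x₀-y| * 1 ≤ (v x₀ - v y)/|x₀-y| * (rr / |x₀-y|) := by
      apply mul_le_mul_of_nonneg_left _ (by positivity)
      rw [le_div_iff₀ hdp]
      simpa using hrr y hy
    have heq : (v x₀ - v y)/|x₀-y| * (rr/|x₀-y|) = rr * ((v x₀ - v y)/|x₀-y|^2) := by
      field_simp
    rw [mul_one] at h3
    linarith
  rw [intervalIntegral.integral_const_mul] at h2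
  calc |(∫ y in a..b, (v y - v x₀) / (x₀ - y)) +
        v x₀ * (Real.log (x₀ - a) - Real.log (x₀ - b)) -
        v x₀ * (Real.log (x₀ - a) - Real.log (x₀ - b))|
      = |(∫ y in a..b, (v y - v x₀) / (x₀ - y))| := by rw [add_sub_cancel_right]
    _ ≤ rr * ∫ y in a..b, (v x₀ - v y) / (x₀ - y)^2 := le_trans h1 h2

theorem hilbert_transform_max_bound (u : ℝ → ℝ) (Mx mn V x₀ L H0 : ℝ)
    (hu : ContDiff ℝ 2 u) (hper : Function.Periodic u (2*π))
    (hMx : IsGreatest (Set.range u) Mx) (hmn : IsLeast (Set.range u) mn)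
    (hV : V = Mx - mn)
    (hmax : ∀ x : ℝ, deriv u x ≤ deriv u x₀)
    (hv0 : 0 < deriv u x₀)
    (hL : Filter.Tendsto (fun ε : ℝ =>
        (1/π) * ∫ y in {y : ℝ | ε ≤ |y|}, (deriv u x₀ - deriv u (x₀ + y)) / y^2)
        (𝓝[>] 0) (𝓝 L))
    (hLpos : 0 < L)
    (hH : Filter.Tendsto (fun ε : ℝ =>
        (1/π) * ∫ y in {y : ℝ | ε ≤ |x₀ - y| ∧ |x₀ - y| ≤ 1/ε}, deriv u y / (x₀ - y))
        (𝓝[>] 0) (𝓝 H0)) :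
    H0^2 ≤ (16/π)*V*L := by
  have hπ : (0:ℝ) < π := Real.pi_pos
  set v : ℝ → ℝ := deriv u with hvdef
  have hudiff : Differentiable ℝ u := hu.differentiable (by norm_num)
  have hvcont : Continuous v := hu.continuous_deriv one_le_two
  have huD : ∀ y, HasDerivAt u (v y) y := fun y => (hudiff y).hasDerivAt
  have hub : ∀ x, u x ≤ Mx := fun x => hMx.2 ⟨x, rfl⟩
  have hlb : ∀ x, mn ≤ u x := fun x => hmn.2 ⟨x, rfl⟩
  have hVnn : 0 ≤ V := by have h1 := hub 0; have h2 := hlb 0; rw [hV]; linarith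
  have hVpos : 0 < V := by
    rcases hVnn.lt_or_eq with h | h
    · exact h
    · exfalso
      have hMm : Mx = mn := by rw [hV] at h; linarith
      have hconst : u = fun _ => Mx :=
        funext fun x => le_antisymm (hub x) (by have := hlb x; rw [hMm]; linarith)
      have : v x₀ = 0 := by rw [hvdef, hconst]; simp
      linarith
  -- periodicity of v
  have hvper : Function.Periodic v (2*π) := by
    intro x
    have h1 : (fun t => u (t + 2*π)) = u := funext fun t => hper t
    have h2 : deriv (fun t => u (t + 2*π)) x = deriv u (x + 2*π) :=
      deriv_comp_add_const u (2*π) x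
    rw [hvdef, ← h2, h1]
  -- lower bound for v
  obtain ⟨x₁, -, hx₁⟩ := (isCompact_Icc (a := (0:ℝ)) (b := 2*π)).exists_isMinOn
      (nonempty_Icc.mpr (by positivity)) hvcont.continuousOn
  have hm : ∀ x, v x₁ ≤ v x := by
    intro x
    obtain ⟨y, hy, hxy⟩ := hvper.exists_mem_Ico (by positivity) x 0
    rw [hxy]
    refine hx₁ ?_
    rw [zero_add] at hy
    exact Ico_subset_Icc_self hy
  set m := v x₁
  -- the shifted function w
  set w : ℝ → ℝ := fun y => u y - (Mx + mn)/2 with hwdef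
  have hwcont : Continuous w := by
    have := hudiff.continuous
    fun_prop
  have hderivw : deriv w = v := by
    funext y
    rw [hvdef]
    have : deriv w y = deriv u y := by
      rw [hwdef]
      exact ((huD y).sub_const _).deriv
    rw [this]
  have hwD : ∀ y, HasDerivAt w (deriv w y) y := by
    intro y
    rw [hderivw]
    exact (huD y).sub_const _
  have hw'cont : Continuous (deriv w) := by rw [hderivw]; exact hvcont
  have hwb : ∀ y, |w y| ≤ V/2 := by
    intro y
    have h1 := hub y; have h2 := hlb y
    show |u y - (Mx + mn)/2| ≤ V/2
    rw [hV, abs_le]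
    constructor <;> linarith
  -- the radius r
  set r := Real.sqrt (2*V/(π*L)) with hrdef
  have hr0 : 0 < r := Real.sqrt_pos.mpr (by positivity)
  have hr2 : r^2 = 2*V/(π*L) := Real.sq_sqrt (by positivity)
  -- nonnegativity of the Λ-integrand
  have hgnn : ∀ t : ℝ, 0 ≤ (v x₀ - v (x₀ + t))/t^2 :=
    fun t => div_nonneg (by linarith [hmax (x₀ + t)]) (sq_nonneg t)
  -- THE KEY ESTIMATE
  have key : ∀ ε ∈ Ioo (0:ℝ) (min r r⁻¹),
      |(1/π) * ∫ y in {y : ℝ | ε ≤ |x₀ - y| ∧ |x₀ - y| ≤ 1/ε}, v y / (x₀ - y)| ≤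
        r * ((1/π) * ∫ y in {y : ℝ | ε ≤ |y|}, (v x₀ - v (x₀ + y)) / y^2) + 2*V/(π*r) := by
    intro ε hε
    obtain ⟨hε0, hεm⟩ := hε
    have hεr : ε < r := lt_of_lt_of_le hεm (min_le_left _ _)
    have hεr' : ε < r⁻¹ := lt_of_lt_of_le hεm (min_le_right _ _)
    have hrR : r < 1/ε := by
      rw [lt_div_iff₀ hε0]
      have h := mul_lt_mul_of_pos_right hεr' hr0
      rw [inv_mul_cancel₀ (ne_of_gt hr0)] at h
      linarith [h]
    have hεE : ε < 1/ε := hεr.trans hrR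
    have hle1 : x₀ - 1/ε ≤ x₀ - r := by linarith
    have hle2 : x₀ - r ≤ x₀ - ε := by linarith
    have hle3 : x₀ - 1/ε ≤ x₀ - ε := by linarith
    have hle4 : x₀ + ε ≤ x₀ + r := by linarith
    have hle5 : x₀ + r ≤ x₀ + 1/ε := by linarith
    have hle6 : x₀ + ε ≤ x₀ + 1/ε := by linarith
    have hzL : ∀ y ∈ Icc (x₀ - 1/ε) (x₀ - ε), x₀ - y ≠ 0 := by
      intro y hy
      have := (mem_Icc.mp hy).2
      exact ne_of_gt (by linarith)
    have hzR : ∀ y ∈ Icc (x₀ + ε) (x₀ + 1/ε), x₀ - y ≠ 0 := by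
      intro y hy
      have := (mem_Icc.mp hy).1
      exact ne_of_lt (by linarith)
    have hzL1 : ∀ y ∈ Icc (x₀ - 1/ε) (x₀ - r), x₀ - y ≠ 0 :=
      fun y hy => hzL y (Icc_subset_Icc le_rfl hle2 hy)
    have hzL2 : ∀ y ∈ Icc (x₀ - r) (x₀ - ε), x₀ - y ≠ 0 :=
      fun y hy => hzL y (Icc_subset_Icc hle1 le_rfl hy)
    have hzR1 : ∀ y ∈ Icc (x₀ + ε) (x₀ + r), x₀ - y ≠ 0 :=
      fun y hy => hzR y (Icc_subset_Icc le_rfl hle5 hy)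
    have hzR2 : ∀ y ∈ Icc (x₀ + r) (x₀ + 1/ε), x₀ - y ≠ 0 :=
      fun y hy => hzR y (Icc_subset_Icc hle4 le_rfl hy)
    -- set decomposition
    have hset : {y : ℝ | ε ≤ |x₀ - y| ∧ |x₀ - y| ≤ 1/ε} =
        Icc (x₀ - 1/ε) (x₀ - ε) ∪ Icc (x₀ + ε) (x₀ + 1/ε) := by
      ext y
      simp only [mem_setOf_eq, mem_union, mem_Icc]
      rcases le_total y x₀ with h | h
      · rw [abs_of_nonneg (by linarith)]
        constructor
        · rintro ⟨h1, h2⟩; left; exact ⟨by linarith, by linarith⟩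
        · rintro (⟨h1, h2⟩ | ⟨h1, h2⟩) <;> constructor <;> linarith
      · rw [abs_of_nonpos (by linarith)]
        constructor
        · rintro ⟨h1, h2⟩; right; exact ⟨by linarith, by linarith⟩
        · rintro (⟨h1, h2⟩ | ⟨h1, h2⟩) <;> constructor <;> linarith
    have hContL : ContinuousOn (fun y => v y / (x₀ - y)) (Icc (x₀ - 1/ε) (x₀ - ε)) :=
      ContinuousOn.div hvcont.continuousOn (by fun_prop) hzL
    have hContR : ContinuousOn (fun y => v y / (x₀ - y)) (Icc (x₀ + ε) (x₀ + 1/ε)) :=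
      ContinuousOn.div hvcont.continuousOn (by fun_prop) hzR
    have hIccL : IntegrableOn (fun y => v y / (x₀ - y)) (Icc (x₀ - 1/ε) (x₀ - ε)) :=
      hContL.integrableOn_Icc
    have hIccR : IntegrableOn (fun y => v y / (x₀ - y)) (Icc (x₀ + ε) (x₀ + 1/ε)) :=
      hContR.integrableOn_Icc
    have hdisj : Disjoint (Icc (x₀ - 1/ε) (x₀ - ε)) (Icc (x₀ + ε) (x₀ + 1/ε)) := by
      rw [Set.disjoint_left]
      intro y hy1 hy2
      have h1 := (mem_Icc.mp hy1).2
      have h2 := (mem_Icc.mp hy2).1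
      linarith
    have hI1 : IntervalIntegrable (fun y => v y / (x₀ - y)) volume (x₀-1/ε) (x₀-r) := by
      apply ContinuousOn.intervalIntegrable
      rw [uIcc_of_le hle1]
      exact hContL.mono (Icc_subset_Icc le_rfl hle2)
    have hI2 : IntervalIntegrable (fun y => v y / (x₀ - y)) volume (x₀-r) (x₀-ε) := by
      apply ContinuousOn.intervalIntegrable
      rw [uIcc_of_le hle2]
      exact hContL.mono (Icc_subset_Icc hle1 le_rfl)
    have hI3 : IntervalIntegrable (fun y => v y / (x₀ - y)) volume (x₀+ε) (x₀+r) := by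
      apply ContinuousOn.intervalIntegrable
      rw [uIcc_of_le hle4]
      exact hContR.mono (Icc_subset_Icc le_rfl hle5)
    have hI4 : IntervalIntegrable (fun y => v y / (x₀ - y)) volume (x₀+r) (x₀+1/ε) := by
      apply ContinuousOn.intervalIntegrable
      rw [uIcc_of_le hle5]
      exact hContR.mono (Icc_subset_Icc hle4 le_rfl)
    have hdecomp : (∫ y in {y : ℝ | ε ≤ |x₀ - y| ∧ |x₀ - y| ≤ 1/ε}, v y / (x₀ - y)) =
        ((∫ y in (x₀-1/ε)..(x₀-r), v y/(x₀-y)) + (∫ y in (x₀-r)..(x₀-ε), v y/(x₀-y))) +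
        ((∫ y in (x₀+ε)..(x₀+r), v y/(x₀-y)) + (∫ y in (x₀+r)..(x₀+1/ε), v y/(x₀-y))) := by
      rw [hset, setIntegral_union hdisj measurableSet_Icc hIccL hIccR]
      congr 1
      · rw [intervalIntegral.integral_add_adjacent_intervals hI1 hI2,
          intervalIntegral.integral_of_le hle3, ← integral_Icc_eq_integral_Ioc]
      · rw [intervalIntegral.integral_add_adjacent_intervals hI3 hI4,
          intervalIntegral.integral_of_le hle6, ← integral_Icc_eq_integral_Ioc]
    -- far bounds
    have hfarL : |∫ y in (x₀-1/ε)..(x₀-r), v y/(x₀-y)| ≤ V/r := by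
      have h := aux_far w x₀ (x₀-1/ε) (x₀-r) (V/2) hwD hw'cont hwcont hle1 hzL1 hwb
      rw [hderivw] at h
      rw [show x₀ - (x₀ - r) = r from by ring, show x₀ - (x₀ - 1/ε) = 1/ε from by ring] at h
      rw [abs_of_pos (by positivity : (0:ℝ) < r⁻¹),
        abs_of_pos (by positivity : (0:ℝ) < (1/ε)⁻¹),
        show (1/ε)⁻¹ = ε from by field_simp] at h
      calc |∫ y in (x₀-1/ε)..(x₀-r), v y/(x₀-y)|
          ≤ V/2 * r⁻¹ + V/2 * ε + V/2 * (r⁻¹ - ε) := h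
        _ = V/r := by ring
    have hfarR : |∫ y in (x₀+r)..(x₀+1/ε), v y/(x₀-y)| ≤ V/r := by
      have h := aux_far w x₀ (x₀+r) (x₀+1/ε) (V/2) hwD hw'cont hwcont hle5 hzR2 hwb
      rw [hderivw] at h
      rw [show x₀ - (x₀ + 1/ε) = -(1/ε) from by ring,
        show x₀ - (x₀ + r) = -r from by ring] at h
      rw [show (-(1/ε))⁻¹ = -ε from by rw [inv_neg, one_div, inv_inv],
        show (-r)⁻¹ = -r⁻¹ from inv_neg,
        abs_neg, abs_neg,
        abs_of_pos (by positivity : (0:ℝ) < ε),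
        abs_of_pos (by positivity : (0:ℝ) < r⁻¹)] at h
      calc |∫ y in (x₀+r)..(x₀+1/ε), v y/(x₀-y)|
          ≤ V/2 * ε + V/2 * r⁻¹ + V/2 * (-ε - -r⁻¹) := h
        _ = V/r := by ring
    -- near bounds
    have hrrL : ∀ y ∈ Icc (x₀-r) (x₀-ε), |x₀ - y| ≤ r := by
      intro y hy
      obtain ⟨h1, h2⟩ := mem_Icc.mp hy
      rw [abs_of_nonneg (by linarith)]
      linarith
    have hrrR : ∀ y ∈ Icc (x₀+ε) (x₀+r), |x₀ - y| ≤ r := by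
      intro y hy
      obtain ⟨h1, h2⟩ := mem_Icc.mp hy
      rw [abs_of_nonpos (by linarith)]
      linarith
    have hnearL := aux_near v hvcont x₀ (x₀-r) (x₀-ε) r hle2 hmax hzL2 hrrL
    have hnearR := aux_near v hvcont x₀ (x₀+ε) (x₀+r) r hle4 hmax hzR1 hrrR
    rw [show x₀ - (x₀ - r) = r from by ring, show x₀ - (x₀ - ε) = ε from by ring] at hnearL
    rw [show x₀ - (x₀ + ε) = -ε from by ring, show x₀ - (x₀ + r) = -r from by ring,
      Real.log_neg_eq_log, Real.log_neg_eq_log] at hnearR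
    have hnear : |(∫ y in (x₀-r)..(x₀-ε), v y/(x₀-y)) + (∫ y in (x₀+ε)..(x₀+r), v y/(x₀-y))| ≤
        r * (∫ y in (x₀-r)..(x₀-ε), (v x₀ - v y)/(x₀-y)^2) +
        r * (∫ y in (x₀+ε)..(x₀+r), (v x₀ - v y)/(x₀-y)^2) := by
      have heq : (∫ y in (x₀-r)..(x₀-ε), v y/(x₀-y)) + (∫ y in (x₀+ε)..(x₀+r), v y/(x₀-y)) =
          ((∫ y in (x₀-r)..(x₀-ε), v y/(x₀-y)) - v x₀ * (Real.log r - Real.log ε)) +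
          ((∫ y in (x₀+ε)..(x₀+r), v y/(x₀-y)) - v x₀ * (Real.log ε - Real.log r)) := by ring
      rw [heq]
      exact (abs_add_le _ _).trans (add_le_add hnearL hnearR)
    -- change of variables to the Λ-integrand
    have htransL : (∫ y in (x₀-r)..(x₀-ε), (v x₀ - v y)/(x₀-y)^2) =
        ∫ t in (-r)..(-ε), (v x₀ - v (x₀+t))/t^2 := by
      have h := intervalIntegral.integral_comp_add_right
        (a := -r) (b := -ε) (fun y => (v x₀ - v y)/(x₀-y)^2) x₀
      rw [show -r + x₀ = x₀ - r from by ring, show -ε + x₀ = x₀ - ε from by ring] at h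
      rw [← h]
      apply intervalIntegral.integral_congr
      intro t _
      simp only
      rw [show x₀ - (t + x₀) = -t from by ring, neg_sq, show x₀ + t = t + x₀ from by ring]
    have htransR : (∫ y in (x₀+ε)..(x₀+r), (v x₀ - v y)/(x₀-y)^2) =
        ∫ t in ε..r, (v x₀ - v (x₀+t))/t^2 := by
      have h := intervalIntegral.integral_comp_add_right
        (a := ε) (b := r) (fun y => (v x₀ - v y)/(x₀-y)^2) x₀
      rw [show ε + x₀ = x₀ + ε from by ring, show r + x₀ = x₀ + r from by ring] at h
      rw [← h]
      apply intervalIntegral.integral_congr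
      intro t _
      simp only
      rw [show x₀ - (t + x₀) = -t from by ring, neg_sq, show x₀ + t = t + x₀ from by ring]
    -- integrability of the Λ-integrand on the tail
    have hmeas : Measurable (fun t : ℝ => (v x₀ - v (x₀+t))/t^2) := by
      apply Measurable.div
      · exact measurable_const.sub (hvcont.measurable.comp (measurable_const.add measurable_id))
      · exact measurable_id.pow_const 2
    have hCnn : 0 ≤ v x₀ - m := by linarith [hm x₀]
    have hIciInt : ∀ vv : ℝ → ℝ, Measurable vv → (∀ x, vv x ≤ v x₀) → (∀ x, m ≤ vv x) →
        IntegrableOn (fun t : ℝ => (v x₀ - vv t)/t^2) (Ici ε) := by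
      intro vv hvvmeas hvvle hvvge
      rw [integrableOn_Ici_iff_integrableOn_Ioi]
      have hdom : IntegrableOn (fun t : ℝ => (v x₀ - m) * t ^ (-2:ℝ)) (Ioi ε) :=
        (integrableOn_Ioi_rpow_of_lt (by norm_num) hε0).const_mul (v x₀ - m)
      apply Integrable.mono hdom
      · exact (Measurable.div (measurable_const.sub hvvmeas)
          (measurable_id.pow_const 2)).aestronglyMeasurable
      · rw [ae_restrict_iff' measurableSet_Ioi]
        filter_upwards with t ht
        have ht0 : 0 < t := lt_trans hε0 ht
        have hrpow : t ^ (-2:ℝ) = (t^2)⁻¹ := by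
          rw [Real.rpow_neg ht0.le, Real.rpow_two]
        rw [Real.norm_eq_abs, Real.norm_eq_abs, hrpow,
          abs_of_nonneg (div_nonneg (by linarith [hvvle t]) (sq_nonneg t)),
          abs_of_nonneg (mul_nonneg hCnn (by positivity)),
          ← div_eq_mul_inv]
        have hge := hvvge t
        gcongr
    have hgIci : IntegrableOn (fun t : ℝ => (v x₀ - v (x₀+t))/t^2) (Ici ε) :=
      hIciInt (fun t => v (x₀ + t))
        (hvcont.measurable.comp (measurable_const.add measurable_id))
        (fun x => hmax (x₀+x)) (fun x => hm (x₀+x))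
    have hgIic : IntegrableOn (fun t : ℝ => (v x₀ - v (x₀+t))/t^2) (Iic (-ε)) := by
      have hF : IntegrableOn (fun t : ℝ => (v x₀ - v (x₀ + -t))/t^2) (Ici ε) :=
        hIciInt (fun t => v (x₀ + -t))
          (hvcont.measurable.comp (measurable_const.add measurable_id.neg))
          (fun x => hmax (x₀ + -x)) (fun x => hm (x₀ + -x))
      rw [← integrable_indicator_iff measurableSet_Iic]
      have hFind : Integrable ((Ici ε).indicator (fun t : ℝ => (v x₀ - v (x₀ + -t))/t^2))
          volume := (integrable_indicator_iff measurableSet_Ici).mpr hF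
      have hcn := hFind.comp_neg
      refine (congrArg (fun g => Integrable g volume) ?_).mpr hcn
      funext t
      rw [Set.indicator_apply, Set.indicator_apply]
      simp only [mem_Iic, mem_Ici]
      by_cases h : t ≤ -ε
      · rw [if_pos h, if_pos (by linarith : ε ≤ -t), neg_neg, neg_sq]
      · rw [if_neg h, if_neg (by intro hc; exact h (by linarith))]
    have hgT : IntegrableOn (fun t : ℝ => (v x₀ - v (x₀+t))/t^2) {t : ℝ | ε ≤ |t|} := by
      have hTeq : {t : ℝ | ε ≤ |t|} = Iic (-ε) ∪ Ici ε := by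
        ext t
        rw [mem_setOf_eq, le_abs, mem_union, mem_Iic, mem_Ici]
        constructor
        · rintro (h | h)
          · right; exact h
          · left; linarith
        · rintro (h | h)
          · right; linarith
          · left; exact h
      rw [hTeq]
      exact hgIic.union hgIci
    have hunion2 : (∫ t in (-r)..(-ε), (v x₀ - v (x₀+t))/t^2) +
        (∫ t in ε..r, (v x₀ - v (x₀+t))/t^2)
        ≤ ∫ t in {t : ℝ | ε ≤ |t|}, (v x₀ - v (x₀+t))/t^2 := by
      have hsub1 : Icc (-r) (-ε) ⊆ {t : ℝ | ε ≤ |t|} := by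
        intro t ht
        obtain ⟨h1, h2⟩ := mem_Icc.mp ht
        rw [mem_setOf_eq, le_abs]; right; linarith
      have hsub2 : Icc ε r ⊆ {t : ℝ | ε ≤ |t|} := by
        intro t ht
        obtain ⟨h1, h2⟩ := mem_Icc.mp ht
        rw [mem_setOf_eq, le_abs]; left; linarith
      have hdisj2 : Disjoint (Icc (-r) (-ε)) (Icc ε r) := by
        rw [Set.disjoint_left]
        intro t ht1 ht2
        have h1 := (mem_Icc.mp ht1).2
        have h2 := (mem_Icc.mp ht2).1
        linarith
      rw [intervalIntegral.integral_of_le (by linarith : -r ≤ -ε),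
        ← integral_Icc_eq_integral_Ioc,
        intervalIntegral.integral_of_le hεr.le, ← integral_Icc_eq_integral_Ioc,
        ← setIntegral_union hdisj2 measurableSet_Icc (hgT.mono_set hsub1)
          (hgT.mono_set hsub2)]
      exact setIntegral_mono_set hgT (Eventually.of_forall hgnn)
        ((union_subset hsub1 hsub2).eventuallyLE)
    have hnear2 : |(∫ y in (x₀-r)..(x₀-ε), v y/(x₀-y)) +
        (∫ y in (x₀+ε)..(x₀+r), v y/(x₀-y))| ≤
        r * ∫ t in {t : ℝ | ε ≤ |t|}, (v x₀ - v (x₀+t))/t^2 := by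
      refine hnear.trans ?_
      rw [htransL, htransR, ← mul_add]
      exact mul_le_mul_of_nonneg_left hunion2 hr0.le
    have hbig : |∫ y in {y : ℝ | ε ≤ |x₀ - y| ∧ |x₀ - y| ≤ 1/ε}, v y / (x₀ - y)| ≤
        2*(V/r) + r * ∫ t in {t : ℝ | ε ≤ |t|}, (v x₀ - v (x₀+t))/t^2 := by
      rw [hdecomp]
      have e : ((∫ y in (x₀-1/ε)..(x₀-r), v y/(x₀-y)) + (∫ y in (x₀-r)..(x₀-ε), v y/(x₀-y))) +
          ((∫ y in (x₀+ε)..(x₀+r), v y/(x₀-y)) + (∫ y in (x₀+r)..(x₀+1/ε), v y/(x₀-y))) =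
          ((∫ y in (x₀-1/ε)..(x₀-r), v y/(x₀-y)) +
           ((∫ y in (x₀-r)..(x₀-ε), v y/(x₀-y)) + (∫ y in (x₀+ε)..(x₀+r), v y/(x₀-y)))) +
          (∫ y in (x₀+r)..(x₀+1/ε), v y/(x₀-y)) := by ring
      rw [e]
      have t1 := abs_add_le ((∫ y in (x₀-1/ε)..(x₀-r), v y/(x₀-y)) +
           ((∫ y in (x₀-r)..(x₀-ε), v y/(x₀-y)) + (∫ y in (x₀+ε)..(x₀+r), v y/(x₀-y))))
           (∫ y in (x₀+r)..(x₀+1/ε), v y/(x₀-y))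
      have t2 := abs_add_le (∫ y in (x₀-1/ε)..(x₀-r), v y/(x₀-y))
           ((∫ y in (x₀-r)..(x₀-ε), v y/(x₀-y)) + (∫ y in (x₀+ε)..(x₀+r), v y/(x₀-y)))
      have := hnear2
      have := hfarL
      have := hfarR
      linarith
    rw [abs_mul, abs_of_pos (by positivity : (0:ℝ) < 1/π)]
    calc (1/π) * |∫ y in {y : ℝ | ε ≤ |x₀ - y| ∧ |x₀ - y| ≤ 1/ε}, v y / (x₀ - y)|
        ≤ (1/π) * (2*(V/r) + r * ∫ t in {t : ℝ | ε ≤ |t|}, (v x₀ - v (x₀+t))/t^2) :=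
          mul_le_mul_of_nonneg_left hbig (by positivity)
      _ = r * ((1/π) * ∫ y in {y : ℝ | ε ≤ |y|}, (v x₀ - v (x₀ + y)) / y^2) + 2*V/(π*r) := by
          field_simp
          ring
  -- pass to the limit
  have hδ : 0 < min r r⁻¹ := lt_min hr0 (by positivity)
  have hev : ∀ᶠ ε in 𝓝[>] (0:ℝ),
      |(1/π) * ∫ y in {y : ℝ | ε ≤ |x₀ - y| ∧ |x₀ - y| ≤ 1/ε}, v y / (x₀ - y)| ≤
      r * ((1/π) * ∫ y in {y : ℝ | ε ≤ |y|}, (v x₀ - v (x₀ + y)) / y^2) + 2*V/(π*r) := by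
    filter_upwards [Ioo_mem_nhdsGT_of_mem (left_mem_Ico.mpr hδ)] with ε hε
    exact key ε hε
  have hlim : |H0| ≤ r*L + 2*V/(π*r) :=
    le_of_tendsto_of_tendsto hH.abs ((hL.const_mul r).add_const (2*V/(π*r))) hev
  -- final algebra
  have h4 : r^2*(π*L) = 2*V := by rw [hr2]; field_simp
  have hBeq : 2*V/(π*r) = r*L := by
    rw [div_eq_iff (by positivity : π*r ≠ 0)]
    nlinarith [h4]
  have hlim2 : |H0| ≤ 2*(r*L) := by rw [hBeq] at hlim; linarith
  have h5 : H0^2 ≤ 4*(r^2*L^2) := by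
    have hp := pow_le_pow_left₀ (abs_nonneg H0) hlim2 2
    rw [sq_abs] at hp
    calc H0^2 ≤ (2*(r*L))^2 := hp
      _ = 4*(r^2*L^2) := by ring
  have h6 : 4*(r^2*L^2) = 8*(V*L/π) := by rw [hr2]; field_simp; ring
  have h8 : 0 ≤ V*L/π := by positivity
  have h9 : (16/π)*V*L = 16*(V*L/π) := by ring
  linarith
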